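/- Let M be a matroid on the finite ground set [n] = {1, …, n}, let p ≥ 2 be an integer, and let 𝐢 = (i_1, …, i_p) be a p-tuple of positive integers with i_1 + ⋯ + i_p = n. Then π_{𝐢}(M) equals the coefficient of x_1^{n−i_1} x_2^{n−i_2} ⋯ x_p^{n−i_p} in H(G_M(𝐱_1) G_M(𝐱_2) ⋯ G_M(𝐱_p)), where 𝐱_j = (x_j, x_{j,1}, …, x_{j,n}) are p pairwise disjoint sets of variables, G_M(𝐱_j) = Σ_{I ∈ 𝓘} x_j^{n−|I|} Π_{i ∈ I} x_{j,i}, H = H_1 H_2 ⋯ H_n, and H_i(f) = Σ_{j=1}^{p} (∂f/∂x_{j,i})|_{x_{1,i} = x_{2,i} = ⋯ = x_{p,i} = 0}. Moreover, if 𝐣 = (j_1, …, j_p) is any permutation of 𝐢, then π_{𝐢}(M) = π_{𝐣}(M). -/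

import Mathlib

open scoped Classical
open MvPolynomial

/-- `piTuple N i` is the number of ordered partitions `(A_1, …, A_p)` of the ground set
of `N` into pairwise disjoint sets, each independent with `|A_s| = i s`. -/
noncomputable def piTuple {β : Type*} (N : Matroid β) {p : ℕ} (i : Fin p → ℕ) : ℕ :=
  {A : Fin p → Set β | (⋃ s, A s) = N.E ∧ Pairwise (Function.onFun Disjoint A) ∧
    ∀ s, N.Indep (A s) ∧ (A s).ncard = i s}.ncard

/-- The variables `𝐱_1, …, 𝐱_p` where `𝐱_j = (x_j, x_{j,1}, …, x_{j,n})`: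
the pair `(j, none)` is the homogenizing variable `x_j` of the `j`-th copy, and
`(j, some i)` is the variable `x_{j,i}`. -/
abbrev PVar (p n : ℕ) := Fin p × Option (Fin n)

/-- The polynomial `G_M(𝐱_j) = Σ_{I ∈ 𝓘} x_j^{n-|I|} Π_{i ∈ I} x_{j,i}`. -/
noncomputable def GMp {n : ℕ} (M : Matroid (Fin n)) (p : ℕ) (j : Fin p) :
    MvPolynomial (PVar p n) ℝ :=
  ∑ I ∈ Finset.univ.filter (fun I : Finset (Fin n) => M.Indep ↑I),
    MvPolynomial.X (j, (none : Option (Fin n))) ^ (n - I.card) *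
      ∏ i ∈ I, MvPolynomial.X (j, (some i : Option (Fin n)))

/-- The operator `H_i : f ↦ Σ_{j=1}^p (∂f/∂x_{j,i})|_{x_{1,i} = ⋯ = x_{p,i} = 0}`. -/
noncomputable def Hop {p n : ℕ} (i : Fin n) (f : MvPolynomial (PVar p n) ℝ) :
    MvPolynomial (PVar p n) ℝ :=
  MvPolynomial.aeval
    (fun v : PVar p n => if v.2 = some i then 0 else MvPolynomial.X v)
    (∑ j : Fin p, MvPolynomial.pderiv ((j, some i) : PVar p n) f)

/-- The composite operator `H = H_1 H_2 ⋯ H_n`. -/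
noncomputable def Hfull (p n : ℕ) :
    MvPolynomial (PVar p n) ℝ → MvPolynomial (PVar p n) ℝ :=
  (List.finRange n).foldr (fun i g => Hop i ∘ g) id

noncomputable def degT {p n : ℕ} (T : Fin p → Finset (Fin n)) (S : Finset (Fin n)) :
    PVar p n →₀ ℕ :=
  (∑ j, Finsupp.single ((j, none) : PVar p n) (n - (T j).card)) +
    ∑ j, ∑ a ∈ T j ∩ S, Finsupp.single ((j, some a) : PVar p n) 1

lemma degT_apply_none {p n : ℕ} (T : Fin p → Finset (Fin n)) (S : Finset (Fin n)) (j : Fin p) :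
    degT T S (j, none) = n - (T j).card := by
  simp only [degT, Finsupp.add_apply, Finsupp.finset_sum_apply, Finsupp.single_apply,
    Prod.mk.injEq]
  rw [Finset.sum_eq_single j, Finset.sum_eq_zero (fun x _ => Finset.sum_eq_zero fun a _ => by
    simp)]
  · simp
  · intro b _ hb; simp [hb]
  · simp

lemma degT_apply_some {p n : ℕ} (T : Fin p → Finset (Fin n)) (S : Finset (Fin n)) (j : Fin p)
    (a : Fin n) : degT T S (j, some a) = if a ∈ T j ∩ S then 1 else 0 := by
  simp only [degT, Finsupp.add_apply, Finsupp.finset_sum_apply, Finsupp.single_apply,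
    Prod.mk.injEq]
  rw [Finset.sum_eq_zero (fun x _ => by simp), zero_add, Finset.sum_eq_single j]
  · simp only [true_and, Option.some.injEq]
    rw [Finset.sum_ite_eq']
  · intro b _ hb; exact Finset.sum_eq_zero fun x _ => by simp [hb]
  · simp

noncomputable def subst {p n : ℕ} (a : Fin n) : PVar p n → MvPolynomial (PVar p n) ℝ :=
  fun v => if v.2 = some a then 0 else X v

lemma aeval_subst_of_zero {p n : ℕ} (a : Fin n) (d : PVar p n →₀ ℕ)
    (h : ∀ j, d (j, some a) = 0) :
    aeval (subst a) (monomial d (1 : ℝ)) = monomial d 1 := by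
  rw [aeval_monomial, monomial_eq]
  congr 1
  apply Finsupp.prod_congr
  intro v hv
  have : v.2 ≠ some a := by
    intro hv2
    obtain ⟨j, o⟩ := v
    cases o with
    | none => simp at hv2
    | some b =>
      rw [Option.some.injEq] at hv2
      subst hv2
      exact (Finsupp.mem_support_iff.mp hv) (h j)
  simp [subst, this]

lemma aeval_subst_of_ne_zero {p n : ℕ} (a : Fin n) (d : PVar p n →₀ ℕ) (c : ℝ)
    (v : PVar p n) (hv2 : v.2 = some a) (hd : d v ≠ 0) :
    aeval (subst a) (monomial d c) = 0 := by
  rw [aeval_monomial]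
  have : (d.prod fun i k => subst a i ^ k) = 0 := by
    apply Finset.prod_eq_zero (Finsupp.mem_support_iff.mpr hd)
    simp [subst, hv2, zero_pow hd]
  rw [this, mul_zero]

lemma degT_sub {p n : ℕ} (T : Fin p → Finset (Fin n)) (S : Finset (Fin n)) (a : Fin n)
    (j₀ : Fin p) (haT : a ∈ T j₀) (haS : a ∈ S) (huniq : ∀ j, a ∈ T j → j = j₀) :
    degT T S - Finsupp.single ((j₀, some a) : PVar p n) 1 = degT T (S.erase a) := by
  ext v
  rw [Finsupp.tsub_apply]
  obtain ⟨j, o⟩ := v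
  cases o with
  | none => simp [degT_apply_none, Finsupp.single_apply]
  | some b =>
    rw [degT_apply_some, degT_apply_some, Finsupp.single_apply]
    by_cases hba : b = a
    · subst hba
      by_cases hj : j = j₀
      · subst hj; simp [haT, haS]
      · have : b ∉ T j := fun h => hj (huniq j h)
        simp [this, Prod.ext_iff, hj]
    · have h1 : ((j₀, some a) : PVar p n) ≠ (j, some b) := by simp [Prod.ext_iff]; tauto
      have h2 : b ∈ S.erase a ↔ b ∈ S := by simp [hba]
      simp only [Finset.mem_inter, h2]
      rw [if_neg h1]
      simp

lemma Hop_monomial_degT {p n : ℕ} (a : Fin n) (T : Fin p → Finset (Fin n))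
    (S : Finset (Fin n)) :
    Hop a (monomial (degT T S) (1 : ℝ)) =
      if a ∈ S ∧ (∃! j, a ∈ T j) then monomial (degT T (S.erase a)) 1 else 0 := by
  have hsub : (fun v : PVar p n => if v.2 = some a then 0 else MvPolynomial.X v) = subst a := rfl
  rw [Hop, hsub, map_sum]
  by_cases haS : a ∈ S
  · by_cases hu : ∃! j, a ∈ T j
    · obtain ⟨j₀, hj₀, huniq⟩ := hu
      rw [if_pos (⟨haS, ⟨j₀, hj₀, huniq⟩⟩ : a ∈ S ∧ ∃! j, a ∈ T j)]
      rw [Finset.sum_eq_single j₀]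
      · rw [pderiv_monomial, degT_apply_some]
        simp only [Finset.mem_inter, hj₀, haS, and_self, if_true, Nat.cast_one, mul_one]
        rw [degT_sub T S a j₀ hj₀ haS huniq]
        apply aeval_subst_of_zero
        intro j
        rw [degT_apply_some]
        simp
      · intro j _ hj
        rw [pderiv_monomial, degT_apply_some]
        have : a ∉ T j := fun h => hj (huniq j h)
        simp [this]
      · simp
    · rw [if_neg (by tauto)]
      apply Finset.sum_eq_zero
      intro j _
      rw [pderiv_monomial, degT_apply_some]
      by_cases hj : a ∈ T j
      · -- there is another j' ≠ j with a ∈ T j'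
        have : ∃ j', a ∈ T j' ∧ j' ≠ j := by
          by_contra hc
          push_neg at hc
          exact hu ⟨j, hj, fun j' hj' => hc j' hj'⟩
        obtain ⟨j', hj', hne⟩ := this
        apply aeval_subst_of_ne_zero a _ _ ((j', some a) : PVar p n) rfl
        rw [Finsupp.tsub_apply, degT_apply_some, Finsupp.single_apply]
        have : ((j, some a) : PVar p n) ≠ (j', some a) := by simp [Prod.ext_iff]; tauto
        simp [hj', haS, this]
      · simp [hj, haS]
  · rw [if_neg (by tauto)]
    apply Finset.sum_eq_zero
    intro j _
    rw [pderiv_monomial, degT_apply_some]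
    simp [haS]

lemma Hop_add {p n : ℕ} (a : Fin n) (f g : MvPolynomial (PVar p n) ℝ) :
    Hop a (f + g) = Hop a f + Hop a g := by
  simp [Hop, map_add, Finset.sum_add_distrib]

lemma Hop_zero {p n : ℕ} (a : Fin n) : Hop a (0 : MvPolynomial (PVar p n) ℝ) = 0 := by
  simp [Hop]

lemma Hop_sum {p n : ℕ} (a : Fin n) {ι : Type*} (s : Finset ι)
    (f : ι → MvPolynomial (PVar p n) ℝ) :
    Hop a (∑ x ∈ s, f x) = ∑ x ∈ s, Hop a (f x) := by
  induction s using Finset.cons_induction with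
  | empty => simp [Hop_zero]
  | cons b s hb ih => rw [Finset.sum_cons, Finset.sum_cons, Hop_add, ih]

noncomputable def foldH {p n : ℕ} (L : List (Fin n)) :
    MvPolynomial (PVar p n) ℝ → MvPolynomial (PVar p n) ℝ :=
  L.foldr (fun i g => Hop i ∘ g) id

lemma foldH_sum {p n : ℕ} (L : List (Fin n)) {ι : Type*} (s : Finset ι)
    (f : ι → MvPolynomial (PVar p n) ℝ) :
    foldH L (∑ x ∈ s, f x) = ∑ x ∈ s, foldH L (f x) := by
  induction L with
  | nil => rfl
  | cons a L ih =>
    show Hop a (foldH L _) = _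
    rw [ih, Hop_sum]
    rfl

lemma foldH_monomial {p n : ℕ} (T : Fin p → Finset (Fin n)) (L : List (Fin n))
    (hL : L.Nodup) (S : Finset (Fin n)) (hS : L.toFinset ⊆ S) :
    foldH L (monomial (degT T S) (1 : ℝ)) =
      if ∀ a ∈ L, ∃! j, a ∈ T j then monomial (degT T (S \ L.toFinset)) 1 else 0 := by
  induction L generalizing S with
  | nil => simp [foldH, degT]
  | cons a L ih =>
    have hL' : L.Nodup := hL.of_cons
    have haL : a ∉ L := by simp at hL; exact hL.1
    have hS' : L.toFinset ⊆ S := fun x hx => hS (by simp [List.mem_toFinset] at hx ⊢; tauto)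
    have haS : a ∈ S := hS (by simp)
    show Hop a (foldH L (monomial (degT T S) 1)) = _
    rw [ih hL' S hS']
    by_cases hcond : ∀ b ∈ L, ∃! j, b ∈ T j
    · rw [if_pos hcond, Hop_monomial_degT]
      have haSL : a ∈ S \ L.toFinset := by
        simp [Finset.mem_sdiff, haS, List.mem_toFinset, haL]
      have herase : (S \ L.toFinset).erase a = S \ (a :: L).toFinset := by
        ext x
        simp only [Finset.mem_erase, Finset.mem_sdiff, List.toFinset_cons, Finset.mem_insert,
          List.mem_toFinset]
        tauto
      by_cases hu : ∃! j, a ∈ T j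
      · rw [if_pos ⟨haSL, hu⟩, herase,
          if_pos (by intro b hb; rcases List.mem_cons.mp hb with h | h
                     · exact h ▸ hu
                     · exact hcond b h)]
      · rw [if_neg (by tauto), if_neg (by
          intro hc
          exact hu (hc a (List.mem_cons_self)))]
    · rw [if_neg hcond, Hop_zero, if_neg (by
        intro hc
        exact hcond fun b hb => hc b (List.mem_cons_of_mem a hb))]

lemma prod_monomial_one {σ : Type*} {ι : Type*} (s : Finset ι) (f : ι → (σ →₀ ℕ)) :
    ∏ x ∈ s, monomial (f x) (1 : ℝ) = monomial (∑ x ∈ s, f x) 1 := by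
  induction s using Finset.cons_induction with
  | empty => simp [monomial_zero']
  | cons b s hb ih => rw [Finset.prod_cons, Finset.sum_cons, ih, monomial_mul, one_mul]

lemma GMp_term {p n : ℕ} (j : Fin p) (I : Finset (Fin n)) :
    (MvPolynomial.X ((j, none) : PVar p n) ^ (n - I.card) *
      ∏ i ∈ I, MvPolynomial.X ((j, some i) : PVar p n) : MvPolynomial (PVar p n) ℝ) =
      monomial (Finsupp.single ((j, none) : PVar p n) (n - I.card) +
        ∑ i ∈ I, Finsupp.single ((j, some i) : PVar p n) 1) 1 := by
  rw [X_pow_eq_monomial]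
  have : ∀ i : Fin n, (MvPolynomial.X ((j, some i) : PVar p n) : MvPolynomial (PVar p n) ℝ) =
      monomial (Finsupp.single ((j, some i) : PVar p n) 1) 1 := fun i => by
    rw [← X_pow_eq_monomial, pow_one]
  simp_rw [this]
  rw [prod_monomial_one, monomial_mul, one_mul]

lemma GMp_prod {n : ℕ} (M : Matroid (Fin n)) (p : ℕ) :
    ∏ j : Fin p, GMp M p j =
      ∑ T ∈ Fintype.piFinset
        (fun _ : Fin p => Finset.univ.filter (fun I : Finset (Fin n) => M.Indep ↑I)),
        monomial (degT T Finset.univ) (1 : ℝ) := by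
  unfold GMp
  rw [Finset.prod_univ_sum]
  apply Finset.sum_congr rfl
  intro T _
  simp_rw [GMp_term]
  rw [prod_monomial_one]
  congr 1
  rw [degT, Finset.sum_add_distrib]
  simp [Finset.inter_univ]

lemma degT_empty {p n : ℕ} (T : Fin p → Finset (Fin n)) :
    degT T ∅ = ∑ j, Finsupp.single ((j, none) : PVar p n) (n - (T j).card) := by
  simp [degT]

lemma sum_single_none_apply {p n : ℕ} (c : Fin p → ℕ) (j : Fin p) :
    (∑ j' : Fin p, Finsupp.single ((j', none) : PVar p n) (c j')) (j, none) = c j := by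
  rw [Finsupp.finset_sum_apply, Finset.sum_eq_single j]
  · simp
  · intro b _ hb; simp [Finsupp.single_apply, Prod.ext_iff, hb]
  · simp

lemma Hfull_prod_GMp {n : ℕ} (M : Matroid (Fin n)) (p : ℕ) :
    Hfull p n (∏ j : Fin p, GMp M p j) =
      ∑ T ∈ Fintype.piFinset
        (fun _ : Fin p => Finset.univ.filter (fun I : Finset (Fin n) => M.Indep ↑I)),
        if ∀ a : Fin n, ∃! j, a ∈ T j then
          monomial (∑ j, Finsupp.single ((j, none) : PVar p n) (n - (T j).card)) (1 : ℝ)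
        else 0 := by
  have hH : Hfull p n = foldH (List.finRange n) := rfl
  rw [hH, GMp_prod, foldH_sum]
  apply Finset.sum_congr rfl
  intro T _
  rw [foldH_monomial T _ (List.nodup_finRange n) Finset.univ
    (by rw [List.toFinset_finRange])]
  rw [List.toFinset_finRange, Finset.sdiff_self]
  by_cases h : ∀ a : Fin n, ∃! j, a ∈ T j
  · rw [if_pos (fun a _ => h a), if_pos h, degT_empty]
  · rw [if_neg (by push_neg at h ⊢; obtain ⟨a, ha⟩ := h; exact ⟨a, List.mem_finRange a, ha⟩),
      if_neg h]

lemma coeff_count {n : ℕ} (M : Matroid (Fin n)) (p : ℕ) (i : Fin p → ℕ)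
    (hle : ∀ j, i j ≤ n) :
    MvPolynomial.coeff
        (∑ j : Fin p, Finsupp.single ((j, none) : PVar p n) (n - i j))
        (Hfull p n (∏ j : Fin p, GMp M p j)) =
      (((Fintype.piFinset
        (fun _ : Fin p => Finset.univ.filter (fun I : Finset (Fin n) => M.Indep ↑I))).filter
        (fun T => (∀ a : Fin n, ∃! j, a ∈ T j) ∧ ∀ j, (T j).card = i j)).card : ℝ) := by
  rw [Hfull_prod_GMp, MvPolynomial.coeff_sum]
  rw [Finset.card_filter, Nat.cast_sum]
  apply Finset.sum_congr rfl
  intro T _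
  rw [apply_ite (MvPolynomial.coeff _), MvPolynomial.coeff_zero, MvPolynomial.coeff_monomial]
  have hcard : ∀ j, (T j).card ≤ n := fun j => le_trans (Finset.card_le_univ _) (by simp)
  have key : ((∑ j, Finsupp.single ((j, none) : PVar p n) (n - (T j).card)) =
      ∑ j, Finsupp.single ((j, none) : PVar p n) (n - i j)) ↔ ∀ j, (T j).card = i j := by
    constructor
    · intro h j
      have e1 := congrArg (fun f => f ((j, none) : PVar p n)) h
      simp only [sum_single_none_apply] at e1
      have e2 := hle j
      have e3 := hcard j
      omega
    · intro h
      apply Finset.sum_congr rfl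
      intro j _
      rw [h j]
  by_cases h1 : ∀ a : Fin n, ∃! j, a ∈ T j
  · by_cases h2 : ∀ j, (T j).card = i j
    · rw [if_pos h1, if_pos (key.mpr h2), if_pos ⟨h1, h2⟩]; simp
    · rw [if_pos h1, if_neg (fun hc => h2 (key.mp hc)), if_neg (fun hc => h2 hc.2)]; simp
  · rw [if_neg h1, if_neg (fun hc => h1 hc.1)]; simp

lemma piTuple_eq_card {n : ℕ} (M : Matroid (Fin n)) (hE : M.E = Set.univ) {p : ℕ}
    (i : Fin p → ℕ) :
    piTuple M i = ((Fintype.piFinset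
        (fun _ : Fin p => Finset.univ.filter (fun I : Finset (Fin n) => M.Indep ↑I))).filter
        (fun T => (∀ a : Fin n, ∃! j, a ∈ T j) ∧ ∀ j, (T j).card = i j)).card := by
  classical
  set F := ((Fintype.piFinset
        (fun _ : Fin p => Finset.univ.filter (fun I : Finset (Fin n) => M.Indep ↑I))).filter
        (fun T => (∀ a : Fin n, ∃! j, a ∈ T j) ∧ ∀ j, (T j).card = i j)) with hF
  set f : (Fin p → Finset (Fin n)) → (Fin p → Set (Fin n)) := fun T j => ↑(T j) with hf
  have hinj : Function.Injective f := by
    intro T T' h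
    funext j
    exact Finset.coe_injective (congrFun h j)
  have hset : {A : Fin p → Set (Fin n) | (⋃ s, A s) = M.E ∧
      Pairwise (Function.onFun Disjoint A) ∧ ∀ s, M.Indep (A s) ∧ (A s).ncard = i s} =
      f '' ↑F := by
    ext A
    simp only [Set.mem_setOf_eq, Set.mem_image, Finset.mem_coe, hF, Finset.mem_filter,
      Fintype.mem_piFinset, Finset.mem_univ, true_and]
    constructor
    · rintro ⟨hU, hD, hI⟩
      refine ⟨fun j => (Set.toFinite (A j)).toFinset, ⟨fun j => ?_, fun a => ?_, fun j => ?_⟩, ?_⟩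
      · rw [Set.Finite.coe_toFinset]
        exact (hI j).1
      · have ha : a ∈ ⋃ s, A s := by rw [hU, hE]; trivial
        obtain ⟨j, hj⟩ := Set.mem_iUnion.mp ha
        refine ⟨j, (Set.Finite.mem_toFinset _).mpr hj, fun j' hj' => ?_⟩
        by_contra hne
        exact (Set.disjoint_left.mp (hD hne)) ((Set.Finite.mem_toFinset _).mp hj') hj
      · rw [← (hI j).2, Set.ncard_eq_toFinset_card (A j) (Set.toFinite (A j))]
      · funext j
        rw [hf]
        exact Set.Finite.coe_toFinset _
    · rintro ⟨T, ⟨hind, huniq, hcard⟩, rfl⟩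
      refine ⟨?_, ?_, fun s => ⟨?_, ?_⟩⟩
      · rw [hE]
        ext a
        simp only [Set.mem_iUnion, hf, Finset.mem_coe, Set.mem_univ, iff_true]
        obtain ⟨j, hj, _⟩ := huniq a
        exact ⟨j, hj⟩
      · intro s t hst
        rw [Function.onFun]
        rw [Set.disjoint_left]
        intro a has hat
        obtain ⟨j, _, hu⟩ := huniq a
        exact hst ((hu s has).trans (hu t hat).symm)
      · have := hind s
        simpa [hf] using this
      · rw [hf]
        simp only
        rw [Set.ncard_coe_finset]
        exact hcard s
  rw [piTuple, hset, Set.ncard_image_of_injective _ hinj, Set.ncard_coe_finset]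

lemma piTuple_perm {β : Type*} (N : Matroid β) {p : ℕ} (i : Fin p → ℕ)
    (σ : Equiv.Perm (Fin p)) : piTuple N (i ∘ σ) = piTuple N i := by
  classical
  have key : ∀ (k : Fin p → ℕ) (τ : Equiv.Perm (Fin p))
      (A : Fin p → Set β),
      ((⋃ s, A s) = N.E ∧ Pairwise (Function.onFun Disjoint A) ∧
        ∀ s, N.Indep (A s) ∧ (A s).ncard = k s) →
      ((⋃ s, (A ∘ τ) s) = N.E ∧ Pairwise (Function.onFun Disjoint (A ∘ τ)) ∧
        ∀ s, N.Indep ((A ∘ τ) s) ∧ ((A ∘ τ) s).ncard = (k ∘ τ) s) := by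
    rintro k τ A ⟨hU, hD, hI⟩
    refine ⟨?_, ?_, fun s => ⟨(hI (τ s)).1, (hI (τ s)).2⟩⟩
    · rw [← hU]
      exact τ.surjective.iUnion_comp A
    · intro s t hst
      exact hD (fun h => hst (τ.injective h))
  have hset : {A : Fin p → Set β | (⋃ s, A s) = N.E ∧ Pairwise (Function.onFun Disjoint A) ∧
        ∀ s, N.Indep (A s) ∧ (A s).ncard = (i ∘ σ) s} =
      (fun A : Fin p → Set β => A ∘ σ) ''
      {A : Fin p → Set β | (⋃ s, A s) = N.E ∧ Pairwise (Function.onFun Disjoint A) ∧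
        ∀ s, N.Indep (A s) ∧ (A s).ncard = i s} := by
    ext A
    simp only [Set.mem_setOf_eq, Set.mem_image]
    constructor
    · intro hA
      refine ⟨A ∘ σ.symm, ?_, ?_⟩
      · have h2 : (i ∘ ⇑σ) ∘ ⇑σ.symm = i := by funext s; simp
        have h3 := key (i ∘ σ) σ.symm A hA
        rwa [h2] at h3
      · funext s; simp
    · rintro ⟨B, hB, rfl⟩
      exact key i σ B hB
  have hinj : Function.Injective (fun A : Fin p → Set β => A ∘ σ) := by
    intro A B h
    funext s
    have := congrFun h (σ.symm s)
    simpa using this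
  rw [piTuple, piTuple, hset, Set.ncard_image_of_injective _ hinj]

/-- For a matroid `M` on `{1, …, n}`, `p ≥ 2`, and a tuple `(i_1, …, i_p)` of positive
integers with `i_1 + ⋯ + i_p = n`, the number `π_𝐢(M)` equals the coefficient of
`x_1^{n-i_1} ⋯ x_p^{n-i_p}` in `H(G_M(𝐱_1) ⋯ G_M(𝐱_p))`; moreover `π_𝐢(M) = π_𝐣(M)`
for any permutation `𝐣` of `𝐢`. -/
theorem piTuple_eq_coeff_H {n : ℕ} (M : Matroid (Fin n)) (hE : M.E = Set.univ)
    (p : ℕ) (hp : 2 ≤ p) (i : Fin p → ℕ) (hpos : ∀ s, 0 < i s) (hsum : ∑ s, i s = n) :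
    (piTuple M i : ℝ) =
      MvPolynomial.coeff
        (∑ j : Fin p, Finsupp.single ((j, none) : PVar p n) (n - i j))
        (Hfull p n (∏ j : Fin p, GMp M p j)) ∧
    ∀ σ : Equiv.Perm (Fin p), piTuple M (i ∘ σ) = piTuple M i := by
  constructor
  · have hle : ∀ j, i j ≤ n := fun j => by
      rw [← hsum]
      exact Finset.single_le_sum (fun _ _ => Nat.zero_le _) (Finset.mem_univ j)
    rw [coeff_count M p i hle, piTuple_eq_card M hE i]
  · exact fun σ => piTuple_perm M i σ
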